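/- Let n, ω be integers with n ≥ 3, ω = 4, and ω + 2 ≤ (n-2)/2 (i.e., n ≥ 14). With ν_k = (ω-2k+2)(n+ω-2k), u_k, d_k, Δ_k, x_k, y_k defined as in the paper for k ∈ {1,2}, the open intervals (x_1, y_1) and (x_2, y_2) have nonempty intersection; hence there exists c ∈ ℝ with (d_k/(2(n-2)))c² - (n-2)c + (n-2)u_k/(2ν_k²) < 0 for both k = 1 and k = 2. -/

import Mathlib

noncomputable section

/-- `ν_k = (ω - 2k + 2)(n + ω - 2k)` as a real number. -/
def nu (n ω k : ℤ) : ℝ := ((ω : ℝ) - 2 * k + 2) * ((n : ℝ) + ω - 2 * k)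

/-- `u_k` from the paper. -/
def uCoeff (n ω k : ℤ) : ℝ :=
  (((n : ℝ) - 3) / (4 * ((n : ℝ) - 2)) -
      (((n : ℝ) - 1) ^ 2 + ((n : ℝ) - 1) * ((ω : ℝ) + 2) ^ 2) /
        (4 * ((n : ℝ) - 2) * (nu n ω k - n + 1))) * nu n ω k

/-- `d_k` from the paper. -/
def dCoeff (n ω k : ℤ) : ℝ :=
  4 * (((n : ℝ) - 1) * ((n : ℝ) - 2) * nu n ω k - (n : ℝ) * ((n : ℝ) - 2) ^ 2 +
    ((ω : ℝ) + 2) ^ 2 * ((n : ℝ) ^ 2 + n + 2))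

/-- The discriminant `Δ_k = (n-2)² - d_k u_k / ν_k²`. -/
def disc (n ω k : ℤ) : ℝ := ((n : ℝ) - 2) ^ 2 - dCoeff n ω k * uCoeff n ω k / nu n ω k ^ 2

/-- The smaller root `x_k`. -/
def xRoot (n ω k : ℤ) : ℝ :=
  (((n : ℝ) - 2) ^ 2 - ((n : ℝ) - 2) * Real.sqrt (disc n ω k)) / dCoeff n ω k

/-- The larger root `y_k`. -/
def yRoot (n ω k : ℤ) : ℝ :=
  (((n : ℝ) - 2) ^ 2 + ((n : ℝ) - 2) * Real.sqrt (disc n ω k)) / dCoeff n ω k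

end

set_option maxHeartbeats 1000000 in
private lemma mem_Ioo_of_quad_neg (n ω k : ℤ) (hn2 : (2 : ℝ) < (n : ℝ))
    (hd : 0 < dCoeff n ω k) (hν : nu n ω k ≠ 0) {c : ℝ}
    (hq : dCoeff n ω k / (2 * ((n : ℝ) - 2)) * c ^ 2 - ((n : ℝ) - 2) * c +
        ((n : ℝ) - 2) * uCoeff n ω k / (2 * nu n ω k ^ 2) < 0) :
    c ∈ Set.Ioo (xRoot n ω k) (yRoot n ω k) := by
  have h2 : (0 : ℝ) < (n : ℝ) - 2 := by linarith
  have h2' : ((n : ℝ) - 2) ≠ 0 := ne_of_gt h2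
  have hkey : (dCoeff n ω k * c - ((n : ℝ) - 2) ^ 2) ^ 2 - ((n : ℝ) - 2) ^ 2 * disc n ω k =
      2 * ((n : ℝ) - 2) * dCoeff n ω k *
        (dCoeff n ω k / (2 * ((n : ℝ) - 2)) * c ^ 2 - ((n : ℝ) - 2) * c +
          ((n : ℝ) - 2) * uCoeff n ω k / (2 * nu n ω k ^ 2)) := by
    unfold disc
    field_simp
    ring
  have hlt : (dCoeff n ω k * c - ((n : ℝ) - 2) ^ 2) ^ 2 < ((n : ℝ) - 2) ^ 2 * disc n ω k := by
    nlinarith [mul_pos (mul_pos (by linarith : (0:ℝ) < 2 * ((n:ℝ)-2)) hd) (neg_pos.mpr hq)]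
  have hΔ : 0 ≤ disc n ω k := by
    nlinarith [sq_nonneg (dCoeff n ω k * c - ((n : ℝ) - 2) ^ 2), sq_nonneg ((n:ℝ) - 2)]
  have hs : Real.sqrt (disc n ω k) ^ 2 = disc n ω k := Real.sq_sqrt hΔ
  have hs0 : 0 ≤ Real.sqrt (disc n ω k) := Real.sqrt_nonneg _
  have hlt2 : (dCoeff n ω k * c - ((n : ℝ) - 2) ^ 2) ^ 2 <
      (((n : ℝ) - 2) * Real.sqrt (disc n ω k)) ^ 2 := by
    rw [mul_pow, hs]; exact hlt
  have hB0 : 0 ≤ ((n : ℝ) - 2) * Real.sqrt (disc n ω k) := mul_nonneg (le_of_lt h2) hs0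
  constructor
  · rw [xRoot, div_lt_iff₀ hd]
    nlinarith [hlt2, hB0]
  · rw [yRoot, lt_div_iff₀ hd]
    nlinarith [hlt2, hB0]

set_option maxHeartbeats 2000000 in
theorem omega_four_case (n : ℤ) (hn : 3 ≤ n) (hωn : 2 * ((4 : ℤ) + 2) ≤ n - 2) :
    ((Set.Ioo (xRoot n 4 1) (yRoot n 4 1) ∩ Set.Ioo (xRoot n 4 2) (yRoot n 4 2)).Nonempty) ∧
    ∃ c : ℝ, ∀ k : ℤ, k = 1 ∨ k = 2 →
      dCoeff n 4 k / (2 * ((n : ℝ) - 2)) * c ^ 2 - ((n : ℝ) - 2) * c +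
        ((n : ℝ) - 2) * uCoeff n 4 k / (2 * nu n 4 k ^ 2) < 0 := by
  have hn14 : (14 : ℤ) ≤ n := by linarith
  have h14 : (14 : ℝ) ≤ (n : ℝ) := by exact_mod_cast hn14
  set N : ℝ := (n : ℝ) with hNdef
  have hNpos : (0 : ℝ) < N := by linarith
  have h2 : (0 : ℝ) < N - 2 := by linarith
  have h2' : N - 2 ≠ 0 := ne_of_gt h2
  have h3' : N + 3 ≠ 0 := by intro h; nlinarith
  have h1' : N + 1 ≠ 0 := by intro h; nlinarith
  have hNne : N ≠ 0 := ne_of_gt hNpos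
  have hN2 : (196 : ℝ) ≤ N ^ 2 := by nlinarith
  have hN3 : (2744 : ℝ) ≤ N ^ 3 := by nlinarith
  have hnu1 : nu n 4 1 = 4 * (N + 2) := by unfold nu; push_cast; ring
  have hnu2 : nu n 4 2 = 2 * N := by unfold nu; push_cast; ring
  have hd1 : dCoeff n 4 1 = 4 * (3 * N ^ 3 + 36 * N ^ 2 + 16 * N + 88) := by
    unfold dCoeff nu; push_cast; ring
  have hd2 : dCoeff n 4 2 = 4 * (N ^ 3 + 34 * N ^ 2 + 36 * N + 72) := by
    unfold dCoeff nu; push_cast; ring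
  have h9' : 4 * (N + 2) - N + 1 ≠ 0 := by intro h; nlinarith
  have h9'' : 2 * N - N + 1 ≠ 0 := by intro h; nlinarith
  have hu1 : uCoeff n 4 1 = 2 * (N + 2) * (N ^ 2 - 17 * N + 4) / (3 * (N - 2) * (N + 3)) := by
    unfold uCoeff
    rw [hnu1]
    push_cast
    rw [← hNdef]
    field_simp
    ring
  have hu2 : uCoeff n 4 2 = -(2 * N * (9 * N - 8)) / ((N - 2) * (N + 1)) := by
    unfold uCoeff
    rw [hnu2]
    push_cast
    rw [← hNdef]
    field_simp
    ring
  have hd1pos : 0 < dCoeff n 4 1 := by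
    rw [hd1]; nlinarith [mul_pos (mul_pos hNpos hNpos) hNpos, mul_pos hNpos hNpos]
  have hd2pos : 0 < dCoeff n 4 2 := by
    rw [hd2]; nlinarith [mul_pos (mul_pos hNpos hNpos) hNpos, mul_pos hNpos hNpos]
  have hd1ne : (4 : ℝ) * (3 * N ^ 3 + 36 * N ^ 2 + 16 * N + 88) ≠ 0 := by
    rw [← hd1]; exact ne_of_gt hd1pos
  set c : ℝ := (N - 2) ^ 2 / (4 * (3 * N ^ 3 + 36 * N ^ 2 + 16 * N + 88)) with hc
  -- positivity of A (the discriminant-type polynomial for k = 1)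
  have hA : (0 : ℝ) < 24 * N ^ 6 + 120 * N ^ 5 + 4240 * N ^ 4 + 9280 * N ^ 3 +
      15168 * N ^ 2 + 20864 * N - 10240 := by
    nlinarith [mul_pos (mul_pos hNpos hNpos) hNpos, mul_pos hNpos hNpos,
      mul_pos (mul_pos (mul_pos hNpos hNpos) hNpos) hNpos,
      mul_pos (mul_pos (mul_pos (mul_pos hNpos hNpos) hNpos) hNpos) hNpos,
      mul_pos (mul_pos (mul_pos (mul_pos (mul_pos hNpos hNpos) hNpos) hNpos) hNpos) hNpos]
  have hq1 : dCoeff n 4 1 / (2 * (N - 2)) * c ^ 2 - (N - 2) * c +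
      (N - 2) * uCoeff n 4 1 / (2 * nu n 4 1 ^ 2) < 0 := by
    have hrw : dCoeff n 4 1 / (2 * (N - 2)) * c ^ 2 - (N - 2) * c +
        (N - 2) * uCoeff n 4 1 / (2 * nu n 4 1 ^ 2) =
        (-((N - 2) * (24 * N ^ 6 + 120 * N ^ 5 + 4240 * N ^ 4 + 9280 * N ^ 3 +
          15168 * N ^ 2 + 20864 * N - 10240))) /
        (2 * (4 * (N + 2)) ^ 2 * (3 * (N - 2) * (N + 3)) *
          (4 * (3 * N ^ 3 + 36 * N ^ 2 + 16 * N + 88))) := by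
      rw [hd1, hnu1, hu1, hc]
      have hp2 : N + 2 ≠ 0 := by intro h; nlinarith
      field_simp
      ring
    rw [hrw]
    apply div_neg_of_neg_of_pos
    · nlinarith [mul_pos h2 hA]
    · have f1 : (0 : ℝ) < 2 * (4 * (N + 2)) ^ 2 := by nlinarith
      have f2 : (0 : ℝ) < 3 * (N - 2) * (N + 3) := by nlinarith
      have f3 : (0 : ℝ) < 4 * (3 * N ^ 3 + 36 * N ^ 2 + 16 * N + 88) := by rw [← hd1]; exact hd1pos
      exact mul_pos (mul_pos f1 f2) f3
  have hB : (0 : ℝ) < 5 * N ^ 10 + 155 * N ^ 9 + 2900 * N ^ 8 + 8352 * N ^ 7 - 66032 * N ^ 6 +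
      149824 * N ^ 5 - 392512 * N ^ 4 + 679168 * N ^ 3 - 715264 * N ^ 2 + 869632 * N -
      495616 := by
    have t1 : (0 : ℝ) ≤ (N ^ 2 - 196) * N ^ 6 :=
      mul_nonneg (by linarith) (by positivity)
    have t2 : (0 : ℝ) ≤ (N ^ 3 - 2744) * N ^ 4 :=
      mul_nonneg (by linarith) (by positivity)
    have t3 : (0 : ℝ) ≤ (N ^ 3 - 2744) * N ^ 2 :=
      mul_nonneg (by linarith) (by positivity)
    nlinarith [t1, t2, t3, mul_pos (mul_pos hNpos hNpos) hNpos,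
      mul_pos (mul_pos (mul_pos hNpos hNpos) hNpos) hNpos,
      pow_pos hNpos 5, pow_pos hNpos 7, pow_pos hNpos 9, pow_pos hNpos 10, pow_pos hNpos 8]
  have hq2 : dCoeff n 4 2 / (2 * (N - 2)) * c ^ 2 - (N - 2) * c +
      (N - 2) * uCoeff n 4 2 / (2 * nu n 4 2 ^ 2) < 0 := by
    have hrw : dCoeff n 4 2 / (2 * (N - 2)) * c ^ 2 - (N - 2) * c +
        (N - 2) * uCoeff n 4 2 / (2 * nu n 4 2 ^ 2) =
        (-(16 * N * (5 * N ^ 10 + 155 * N ^ 9 + 2900 * N ^ 8 + 8352 * N ^ 7 - 66032 * N ^ 6 +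
          149824 * N ^ 5 - 392512 * N ^ 4 + 679168 * N ^ 3 - 715264 * N ^ 2 + 869632 * N -
          495616))) /
        (2 * (N - 2) * (4 * (3 * N ^ 3 + 36 * N ^ 2 + 16 * N + 88)) ^ 2 *
          ((N - 2) * (N + 1)) * (2 * N) ^ 2) := by
      rw [hd2, hnu2, hu2, hc]
      field_simp
      ring
    rw [hrw]
    apply div_neg_of_neg_of_pos
    · nlinarith [mul_pos hNpos hB]
    · have f1 : (0 : ℝ) < 2 * (N - 2) := by linarith
      have f2 : (0 : ℝ) < (4 * (3 * N ^ 3 + 36 * N ^ 2 + 16 * N + 88)) ^ 2 := by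
        apply pow_pos; rw [← hd1]; exact hd1pos
      have f3 : (0 : ℝ) < (N - 2) * (N + 1) := by nlinarith
      have f4 : (0 : ℝ) < (2 * N) ^ 2 := by positivity
      exact mul_pos (mul_pos (mul_pos f1 f2) f3) f4
  have hn2 : (2 : ℝ) < (n : ℝ) := by rw [← hNdef]; linarith
  have hnu1ne : nu n 4 1 ≠ 0 := by rw [hnu1]; intro h; nlinarith
  have hnu2ne : nu n 4 2 ≠ 0 := by rw [hnu2]; intro h; nlinarith
  have hm1 := mem_Ioo_of_quad_neg n 4 1 hn2 hd1pos hnu1ne hq1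
  have hm2 := mem_Ioo_of_quad_neg n 4 2 hn2 hd2pos hnu2ne hq2
  refine ⟨⟨c, hm1, hm2⟩, c, ?_⟩
  rintro k (rfl | rfl)
  · exact hq1
  · exact hq2
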